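/- For w ∈ S_n, in the expansion Π_{2≤i≤n} e_{l_i(w)}(x₁,…,x_{i−1}) = Σ_{u∈S_n} n_{wu} 𝔖_u, the coefficient n_{ww} equals 1, and n_{wu} ≠ 0 implies w⁻¹ ≤ u⁻¹ in lexicographic order. -/

import Mathlib

open MvPolynomial

/-- `S_∞`: a permutation of `ℕ` has finite support. -/
def FinSupp (w : Equiv.Perm ℕ) : Prop := ∃ N, ∀ i, N ≤ i → w i = i

/-- The inversion number `ℓ(w) = #{i < j : w(i) > w(j)}`. -/
noncomputable def ell (w : Equiv.Perm ℕ) : ℕ :=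
  Set.ncard {p : ℕ × ℕ | p.1 < p.2 ∧ w p.2 < w p.1}

/-- Regard an element of `S_n` as a finitely supported permutation of `ℕ`. -/
def extN {n : ℕ} (w : Equiv.Perm (Fin n)) : Equiv.Perm ℕ :=
  w.extendDomain Fin.equivSubtype

/-- `l_i(v) = #{j < i : v(j) > v(i)}` (0-indexed). -/
def code (v : Equiv.Perm ℕ) (i : ℕ) : ℕ :=
  ((Finset.range i).filter fun j => v i < v j).card

/-- The `k`-th elementary symmetric polynomial in `x₀, …, x_{m−1}`. -/
noncomputable def esymmRange (m k : ℕ) : MvPolynomial ℕ ℤ :=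
  ∑ s ∈ Finset.powersetCard k (Finset.range m), ∏ j ∈ s, X j

/-- Strict lexicographic order on permutations: `x >_lex y` iff there is `i`
with `x(j) = y(j)` for `j < i` and `x(i) > y(i)`. -/
def LexGT (x y : Equiv.Perm ℕ) : Prop :=
  ∃ i, (∀ j, j < i → x j = y j) ∧ y i < x i

section Basics

variable {n : ℕ}

theorem extN_apply_lt (w : Equiv.Perm (Fin n)) {i : ℕ} (h : i < n) :
    extN w i = (w ⟨i, h⟩ : Fin n) := by
  have : extN w i = _ := Equiv.Perm.extendDomain_apply_subtype w Fin.equivSubtype (show i < n from h)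
  rw [this]
  rfl

theorem extN_apply_ge (w : Equiv.Perm (Fin n)) {i : ℕ} (h : n ≤ i) :
    extN w i = i :=
  Equiv.Perm.extendDomain_apply_not_subtype w Fin.equivSubtype (by omega)

theorem extN_lt (w : Equiv.Perm (Fin n)) {i : ℕ} (h : i < n) : extN w i < n := by
  rw [extN_apply_lt w h]; exact (w ⟨i, h⟩).2

theorem extN_mul (u v : Equiv.Perm (Fin n)) : extN (u * v) = extN u * extN v :=
  (Equiv.Perm.extendDomain_mul _ u v).symm

theorem extN_one : extN (1 : Equiv.Perm (Fin n)) = 1 :=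
  Equiv.Perm.extendDomain_one _

theorem extN_inv (u : Equiv.Perm (Fin n)) : extN u⁻¹ = (extN u)⁻¹ := by
  rw [eq_inv_iff_mul_eq_one, ← extN_mul, inv_mul_cancel, extN_one]

theorem finSupp_extN (w : Equiv.Perm (Fin n)) : FinSupp (extN w) :=
  ⟨n, fun _ h => extN_apply_ge w h⟩

theorem extN_swap {r : ℕ} (h : r + 1 < n) :
    extN (Equiv.swap (⟨r, by omega⟩ : Fin n) ⟨r + 1, h⟩) = Equiv.swap r (r + 1) := by
  ext i
  rcases lt_or_ge i n with hi | hi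
  · rw [extN_apply_lt _ hi]
    have hval : (Equiv.swap (⟨r, by omega⟩ : Fin n) ⟨r + 1, h⟩ ⟨i, hi⟩ : ℕ)
        = if i = r then r + 1 else if i = r + 1 then r else i := by
      rw [Equiv.swap_apply_def]
      split_ifs with h1 h2 h3 h4 <;> simp_all [Fin.ext_iff] <;> omega
    rw [hval, Equiv.swap_apply_def]
  · rw [extN_apply_ge _ hi, Equiv.swap_apply_of_ne_of_ne (by omega) (by omega)]

theorem swap_nat_apply (r i : ℕ) :
    Equiv.swap r (r + 1) i = if i = r then r + 1 else if i = r + 1 then r else i :=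
  Equiv.swap_apply_def r (r+1) i

end Basics

section Ell

def InvSet (x : Equiv.Perm ℕ) : Set (ℕ × ℕ) := {p : ℕ × ℕ | p.1 < p.2 ∧ x p.2 < x p.1}

theorem ell_eq (x : Equiv.Perm ℕ) : ell x = (InvSet x).ncard := rfl

theorem apply_lt_of_finSupp {x : Equiv.Perm ℕ} {N : ℕ} (hN : ∀ i, N ≤ i → x i = i)
    {i : ℕ} (h : i < N) : x i < N := by
  by_contra hc
  push_neg at hc
  have := hN (x i) hc
  have := x.injective this
  omega

theorem invSet_finite {x : Equiv.Perm ℕ} (hx : FinSupp x) : (InvSet x).Finite := by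
  obtain ⟨N, hN⟩ := hx
  apply Set.Finite.subset ((Set.finite_Iio N).prod (Set.finite_Iio N))
  rintro ⟨i, j⟩ ⟨h1, h2⟩
  replace h1 : i < j := h1
  replace h2 : x j < x i := h2
  simp only [Set.mem_prod, Set.mem_Iio]
  by_contra hc
  have hj : N ≤ j := by
    rcases lt_or_ge j N with h | h
    · exact absurd ⟨by omega, h⟩ hc
    · exact h
  rw [hN j hj] at h2
  rcases lt_or_ge i N with h3 | h3
  · have := apply_lt_of_finSupp hN h3
    omega
  · rw [hN i h3] at h2; omega

theorem ell_swap_of_ascent {x : Equiv.Perm ℕ} (hx : FinSupp x) {r : ℕ}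
    (h : x r < x (r + 1)) : ell (x * Equiv.swap r (r + 1)) = ell x + 1 := by
  classical
  set s := Equiv.swap r (r + 1) with hs
  have hsval : ∀ i, s i = if i = r then r + 1 else if i = r + 1 then r else i :=
    fun i => swap_nat_apply r i
  have hmul : ∀ i, (x * s) i = x (s i) := fun i => rfl
  have hss : ∀ i, s (s i) = i := fun i => Equiv.swap_apply_self _ _ i
  set φ : ℕ × ℕ → ℕ × ℕ := fun p => (s p.1, s p.2) with hφ
  have hord : ∀ p : ℕ × ℕ, p.1 < p.2 → p ≠ (r, r + 1) → s p.1 < s p.2 := by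
    rintro ⟨i, j⟩ hlt hne
    have : ¬(i = r ∧ j = r + 1) := by
      intro ⟨a, b⟩; exact hne (by simp [a, b])
    rw [hsval i, hsval j]
    split_ifs <;> omega
  have hkey : InvSet (x * s) = φ '' InvSet x ∪ {(r, r + 1)} := by
    ext ⟨i, j⟩
    constructor
    · rintro ⟨h1, h2⟩
      rcases eq_or_ne (i, j) (r, r + 1) with he | hne
      · right; exact he
      · left
        refine ⟨(s i, s j), ⟨hord (i,j) h1 hne, ?_⟩, ?_⟩
        · simp only [hmul] at h2
          simpa [hss] using h2
        · simp [hφ, hss]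
    · rintro (⟨⟨i', j'⟩, ⟨hp1, hp2⟩, he⟩ | he)
      · simp only [hφ, Prod.mk.injEq] at he
        obtain ⟨e1, e2⟩ := he
        subst e1; subst e2
        have hne : (i', j') ≠ (r, r + 1) := by
          rintro he
          simp only [Prod.mk.injEq] at he
          have h1' : x j' < x i' := hp2
          rw [he.1, he.2] at h1'
          omega
        exact ⟨hord _ hp1 hne, by simpa [hmul, hss] using hp2⟩
      · simp only [Set.mem_singleton_iff, Prod.mk.injEq] at he
        obtain ⟨a, b⟩ := he
        refine ⟨by omega, ?_⟩
        show x (s j) < x (s i)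
        rw [a, b, show s (r+1) = r from Equiv.swap_apply_right _ _,
            show s r = r + 1 from Equiv.swap_apply_left _ _]
        exact h
  have hfin : (InvSet x).Finite := invSet_finite hx
  have hinj : Function.Injective φ := by
    rintro p q he
    simp only [hφ, Prod.mk.injEq] at he
    exact Prod.ext (s.injective he.1) (s.injective he.2)
  have hnotmem : (r, r + 1) ∉ φ '' InvSet x := by
    rintro ⟨⟨i, j⟩, ⟨h1, _⟩, he⟩
    simp only [hφ, Prod.mk.injEq] at he
    have hi : i = r + 1 := by
      have h' : i = s r := by rw [← he.1, hss]
      rwa [show s r = r + 1 from Equiv.swap_apply_left _ _] at h'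
    have hj : j = r := by
      have h' : j = s (r + 1) := by rw [← he.2, hss]
      rwa [show s (r + 1) = r from Equiv.swap_apply_right _ _] at h'
    omega
  rw [ell_eq, ell_eq, hkey]
  rw [Set.ncard_union_eq (by simpa using hnotmem) (hfin.image φ) (Set.finite_singleton _)]
  rw [Set.ncard_image_of_injective _ hinj, Set.ncard_singleton]

theorem ell_swap_of_descent {x : Equiv.Perm ℕ} (hx : FinSupp x) {r : ℕ}
    (h : x (r + 1) < x r) : ell (x * Equiv.swap r (r + 1)) + 1 = ell x := by
  have h2 : (x * Equiv.swap r (r+1)) r < (x * Equiv.swap r (r+1)) (r+1) := by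
    have e1 : (x * Equiv.swap r (r+1)) r = x (r+1) := by
      simp [Equiv.Perm.mul_apply, Equiv.swap_apply_left]
    have e2 : (x * Equiv.swap r (r+1)) (r+1) = x r := by
      simp [Equiv.Perm.mul_apply, Equiv.swap_apply_right]
    omega
  have hfs : FinSupp (x * Equiv.swap r (r + 1)) := by
    obtain ⟨N, hN⟩ := hx
    refine ⟨max N (r + 2), fun i hi => ?_⟩
    have : Equiv.swap r (r+1) i = i := Equiv.swap_apply_of_ne_of_ne (by omega) (by omega)
    simp only [Equiv.Perm.mul_apply, this]
    exact hN i (by omega)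
  have := ell_swap_of_ascent hfs h2
  rw [mul_assoc, Equiv.swap_mul_self, mul_one] at this
  omega

theorem descent_ell_lt {x : Equiv.Perm ℕ} (hx : FinSupp x) {r : ℕ}
    (h : x (r + 1) < x r) : ell (x * Equiv.swap r (r + 1)) < ell x := by
  have := ell_swap_of_descent hx h
  omega

theorem pos_of_descent {x : Equiv.Perm ℕ} (hx : FinSupp x) {r : ℕ}
    (h : x (r + 1) < x r) : 0 < ell x := by
  have := ell_swap_of_descent hx h; omega

end Ell

section Esymm

theorem finSupp_mul_swap {x : Equiv.Perm ℕ} (hx : FinSupp x) (r : ℕ) :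
    FinSupp (x * Equiv.swap r (r + 1)) := by
  obtain ⟨N, hN⟩ := hx
  refine ⟨max N (r + 2), fun i hi => ?_⟩
  have : Equiv.swap r (r+1) i = i := Equiv.swap_apply_of_ne_of_ne (by omega) (by omega)
  simp only [Equiv.Perm.mul_apply, this]
  exact hN i (by omega)

theorem esymmRange_zero (m : ℕ) : esymmRange m 0 = 1 := by
  simp [esymmRange, Finset.powersetCard_zero]

theorem esymmRange_self (m : ℕ) : esymmRange m m = ∏ j ∈ Finset.range m, X j := by
  have h : Finset.powersetCard m (Finset.range m) = {Finset.range m} := by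
    have := Finset.powersetCard_self (Finset.range m)
    rwa [Finset.card_range] at this
  rw [esymmRange, h, Finset.sum_singleton]

theorem esymmRange_succ (m k : ℕ) :
    esymmRange (m + 1) (k + 1) = esymmRange m (k + 1) + X m * esymmRange m k := by
  classical
  rw [esymmRange, Finset.range_add_one,
    Finset.powersetCard_succ_insert (Finset.notMem_range_self) k]
  rw [Finset.sum_union]
  · congr 1
    rw [Finset.sum_image]
    · rw [esymmRange, Finset.mul_sum]
      refine Finset.sum_congr rfl fun s hs => ?_
      rw [Finset.mem_powersetCard] at hs
      rw [Finset.prod_insert (fun hm => Finset.notMem_range_self (hs.1 hm))]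
    · intro s hs t ht he
      rw [Finset.mem_coe, Finset.mem_powersetCard] at hs ht
      have hms : m ∉ s := fun hm => Finset.notMem_range_self (hs.1 hm)
      have hmt : m ∉ t := fun hm => Finset.notMem_range_self (ht.1 hm)
      have h2 := congrArg (fun u => Finset.erase u m) he
      simpa [Finset.erase_insert hms, Finset.erase_insert hmt] using h2
  · rw [Finset.disjoint_left]
    intro s hs hs'
    rw [Finset.mem_powersetCard] at hs
    rw [Finset.mem_image] at hs'
    obtain ⟨t, ht, rfl⟩ := hs'
    exact Finset.notMem_range_self (hs.1 (Finset.mem_insert_self m t))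

theorem rename_swap_X {r j : ℕ} :
    rename (⇑(Equiv.swap r (r + 1))) (X j : MvPolynomial ℕ ℤ) = X (Equiv.swap r (r+1) j) :=
  rename_X _ j

theorem swap_range_self {r m : ℕ} (h : r + 1 < m) {j : ℕ} (hj : j < m) :
    Equiv.swap r (r + 1) j < m := by
  rw [swap_nat_apply]; split_ifs <;> omega

theorem rename_swap_esymmRange {m r k : ℕ} (h : m ≠ r + 1) :
    rename (⇑(Equiv.swap r (r + 1))) (esymmRange m k) = esymmRange m k := by
  classical
  rcases lt_or_ge r (m - 1) with hm | hm
  · -- r + 1 < m : use bijection by image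
    have hm' : r + 1 < m := by omega
    rw [esymmRange, map_sum]
    set σ := Equiv.swap r (r + 1) with hσ
    have hσinj : Function.Injective (⇑σ) := σ.injective
    refine Finset.sum_nbij' (fun s => s.image σ) (fun s => s.image σ) ?_ ?_ ?_ ?_ ?_
    · intro s hs
      rw [Finset.mem_powersetCard] at hs ⊢
      constructor
      · intro x hx
        rw [Finset.mem_image] at hx
        obtain ⟨y, hy, rfl⟩ := hx
        exact Finset.mem_range.2 (swap_range_self hm' (Finset.mem_range.1 (hs.1 hy)))
      · rw [Finset.card_image_of_injective _ hσinj, hs.2]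
    · intro s hs
      rw [Finset.mem_powersetCard] at hs ⊢
      constructor
      · intro x hx
        rw [Finset.mem_image] at hx
        obtain ⟨y, hy, rfl⟩ := hx
        exact Finset.mem_range.2 (swap_range_self hm' (Finset.mem_range.1 (hs.1 hy)))
      · rw [Finset.card_image_of_injective _ hσinj, hs.2]
    · intro s _
      have hcomp : ⇑σ ∘ ⇑σ = id := funext fun i => Equiv.swap_apply_self _ _ i
      simp only [Finset.image_image, hcomp, Finset.image_id]
    · intro s _
      have hcomp : ⇑σ ∘ ⇑σ = id := funext fun i => Equiv.swap_apply_self _ _ i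
      simp only [Finset.image_image, hcomp, Finset.image_id]
    · intro s hs
      rw [map_prod, Finset.prod_image (fun a _ b _ he => hσinj he)]
      exact Finset.prod_congr rfl fun j _ => rename_swap_X
  · -- m ≤ r
    have hm' : m ≤ r := by omega
    rw [esymmRange, map_sum]
    refine Finset.sum_congr rfl fun s hs => ?_
    rw [Finset.mem_powersetCard] at hs
    rw [map_prod]
    refine Finset.prod_congr rfl fun j hj => ?_
    rw [rename_swap_X, Equiv.swap_apply_of_ne_of_ne]
    · have := Finset.mem_range.1 (hs.1 hj); omega
    · have := Finset.mem_range.1 (hs.1 hj); omega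

theorem X_sub_ne_zero (r : ℕ) : (X r - X (r + 1) : MvPolynomial ℕ ℤ) ≠ 0 := by
  intro h
  rw [sub_eq_zero] at h
  have := MvPolynomial.X_injective (R := ℤ) h
  omega

section SRec

variable (S : Equiv.Perm ℕ → MvPolynomial ℕ ℤ)
variable (hrec : ∀ (v : Equiv.Perm ℕ) (i : ℕ), FinSupp v →
      ell (v * Equiv.swap i (i + 1)) < ell v →
      (X i - X (i + 1)) * S (v * Equiv.swap i (i + 1))
        = S v - rename (⇑(Equiv.swap i (i + 1))) (S v))

include hrec in
theorem S_invariant_of_ascent {x : Equiv.Perm ℕ} (hx : FinSupp x) {r : ℕ}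
    (h : x r < x (r + 1)) :
    rename (⇑(Equiv.swap r (r + 1))) (S x) = S x := by
  set s := Equiv.swap r (r + 1) with hs
  have hxs : FinSupp (x * s) := finSupp_mul_swap hx r
  have hcalc : x * s * s = x := by rw [mul_assoc, Equiv.swap_mul_self, mul_one]
  have hlt : ell (x * s * s) < ell (x * s) := by
    rw [hcalc, ell_swap_of_ascent hx h]; omega
  have h1 := hrec (x * s) r hxs hlt
  rw [hcalc] at h1
  -- h1 : (X r - X (r+1)) * S x = S (x*s) - rename s (S (x*s))
  have h2 := congrArg (rename (⇑s)) h1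
  have hss : ⇑s ∘ ⇑s = id := funext fun i => Equiv.swap_apply_self _ _ i
  rw [map_mul, map_sub, map_sub, rename_swap_X, rename_swap_X,
    show s r = r + 1 from Equiv.swap_apply_left _ _,
    show s (r + 1) = r from Equiv.swap_apply_right _ _,
    rename_rename, hss, rename_id, AlgHom.id_apply] at h2
  -- h2 : (X (r+1) - X r) * rename s (S x) = rename s (S (x*s)) - S (x*s)
  have h3 : (X r - X (r + 1)) * rename (⇑s) (S x) = (X r - X (r + 1)) * S x := by
    linear_combination -h1 - h2
  exact mul_left_cancel₀ (X_sub_ne_zero r) h3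

include hrec in
theorem S_descent {x : Equiv.Perm ℕ} (hx : FinSupp x) {r : ℕ}
    (h : x (r + 1) < x r) :
    S x - rename (⇑(Equiv.swap r (r + 1))) (S x)
      = (X r - X (r + 1)) * S (x * Equiv.swap r (r + 1)) :=
  (hrec x r hx (descent_ell_lt hx h)).symm

end SRec
end Esymm
section Codes

theorem perm_apply_inv_self {α : Type*} (f : Equiv.Perm α) (x : α) : f (f⁻¹ x) = x :=
  Equiv.apply_symm_apply f x

theorem perm_inv_apply_self {α : Type*} (f : Equiv.Perm α) (x : α) : f⁻¹ (f x) = x :=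
  Equiv.symm_apply_apply f x

theorem code_zero (y : Equiv.Perm ℕ) : code y 0 = 0 := by simp [code]

theorem code_le (y : Equiv.Perm ℕ) (i : ℕ) : code y i ≤ i :=
  (Finset.card_filter_le _ _).trans (le_of_eq (Finset.card_range i))

theorem code_eq_self_iff {y : Equiv.Perm ℕ} {j : ℕ} :
    code y j = j ↔ ∀ i < j, y j < y i := by
  constructor
  · intro h i hi
    have hsub : (Finset.range j).filter (fun i => y j < y i) = Finset.range j := by
      apply Finset.eq_of_subset_of_card_le (Finset.filter_subset _ _)
      rw [Finset.card_range]
      exact le_of_eq h.symm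
    have : i ∈ (Finset.range j).filter (fun i => y j < y i) := by
      rw [hsub]; exact Finset.mem_range.2 hi
    exact (Finset.mem_filter.1 this).2
  · intro h
    rw [code, Finset.filter_true_of_mem (fun i hi => h i (Finset.mem_range.1 hi)),
      Finset.card_range]

theorem downward_closed_filter {F : Finset ℕ} (hdc : ∀ j ∈ F, ∀ i < j, i ∈ F) {a : ℕ}
    (hcard : F.card = a) : ∀ j, j ∈ F ↔ j < a := by
  intro j
  constructor
  · intro hj
    have hsub : Finset.range (j + 1) ⊆ F := by
      intro i hi
      rcases Nat.lt_succ_iff_lt_or_eq.1 (Finset.mem_range.1 hi) with h | rfl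
      · exact hdc j hj i h
      · exact hj
    have := Finset.card_le_card hsub
    rw [Finset.card_range, hcard] at this
    omega
  · intro hj
    by_contra hc
    have hsub : F ⊆ Finset.range j := by
      intro k hk
      rcases lt_trichotomy k j with h | rfl | h
      · exact Finset.mem_range.2 h
      · exact absurd hk hc
      · exact absurd (hdc k hk j h) hc
    have := Finset.card_le_card hsub
    rw [Finset.card_range, hcard] at this
    omega

section Ctx
variable {y : Equiv.Perm ℕ} {r a : ℕ}
variable (hdec : ∀ i j, i < j → j ≤ r → y j < y i)
variable (ha : code y (r + 1) = a) (haa : a ≤ r)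

include hdec ha haa in
theorem code_succ_char : ∀ j ≤ r, (y (r + 1) < y j ↔ j < a) := by
  intro j hj
  have hchar := downward_closed_filter (F := (Finset.range (r+1)).filter fun i => y (r+1) < y i)
    (fun j' hj' i hi => by
      rw [Finset.mem_filter, Finset.mem_range] at hj' ⊢
      exact ⟨by omega, hj'.2.trans (hdec i j' hi (by omega))⟩) ha
  have := hchar j
  rw [Finset.mem_filter, Finset.mem_range] at this
  constructor
  · intro h; exact (this.1 ⟨by omega, h⟩)
  · intro h; exact (this.2 h).2

include hdec ha haa in
theorem ascent_at_r : y r < y (r + 1) := by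
  have hch := code_succ_char hdec ha haa r le_rfl
  have hne : y r ≠ y (r + 1) := fun h => by
    have := y.injective h; omega
  have : ¬ (y (r + 1) < y r) := fun h => by
    have := hch.1 h; omega
  omega

include hdec ha haa in
theorem min_prefix : ∀ p ≤ r + 1, p ≠ r → y r < y p := by
  intro p hp hpr
  rcases Nat.lt_succ_iff_lt_or_eq.1 (by omega : p < r + 2) with h | rfl
  · rcases lt_trichotomy p r with h' | rfl | h'
    · exact hdec p r h' le_rfl
    · omega
    · omega
  · exact ascent_at_r hdec ha haa

end Ctx

theorem code_mul_eq_of_fix_ge {y σ : Equiv.Perm ℕ} {j : ℕ} (hσ : ∀ i, j ≤ i → σ i = i) :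
    code (y * σ) j = code y j := by
  have hlt : ∀ i, i < j → σ i < j := by
    intro i hi
    by_contra hc
    push_neg at hc
    have h1 : σ (σ i) = σ i := hσ _ hc
    have := σ.injective h1
    omega
  have hlt' : ∀ i, i < j → σ⁻¹ i < j := by
    intro i hi
    by_contra hc
    push_neg at hc
    have h1 : σ (σ⁻¹ i) = σ⁻¹ i := hσ _ hc
    rw [perm_apply_inv_self] at h1
    omega
  have hj : σ j = j := hσ j le_rfl
  rw [code, code]
  apply Finset.card_bij' (fun i _ => σ i) (fun i _ => σ⁻¹ i)
  · intro i hi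
    rw [Finset.mem_filter, Finset.mem_range] at hi ⊢
    refine ⟨hlt i hi.1, ?_⟩
    have h2 : (y * σ) j = y j := by
      simp only [Equiv.Perm.mul_apply, hj]
    have h3 : (y * σ) i = y (σ i) := rfl
    rw [h2, h3] at hi
    exact hi.2
  · intro i hi
    rw [Finset.mem_filter, Finset.mem_range] at hi ⊢
    refine ⟨hlt' i hi.1, ?_⟩
    show (y * σ) j < (y * σ) (σ⁻¹ i)
    simp only [Equiv.Perm.mul_apply, hj, perm_apply_inv_self]
    exact hi.2
  · intro i _; exact perm_inv_apply_self σ i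
  · intro i _; exact perm_apply_inv_self σ i

theorem code_mul_eq_of_fix_le {y σ : Equiv.Perm ℕ} {j : ℕ} (hσ : ∀ i, i ≤ j → σ i = i) :
    code (y * σ) j = code y j := by
  rw [code, code]
  congr 1
  apply Finset.filter_congr
  intro i hi
  rw [Finset.mem_range] at hi
  show (y * σ) j < (y * σ) i ↔ y j < y i
  simp only [Equiv.Perm.mul_apply, hσ j le_rfl, hσ i (by omega)]

end Codes

section Lex

theorem lexGT_irrefl (x : Equiv.Perm ℕ) : ¬ LexGT x x := by
  rintro ⟨i, _, hl⟩; omega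

theorem lexGT_trans {x y z : Equiv.Perm ℕ} : LexGT x y → LexGT y z → LexGT x z := by
  rintro ⟨i1, ha1, hl1⟩ ⟨i2, ha2, hl2⟩
  rcases lt_trichotomy i1 i2 with h | rfl | h
  · exact ⟨i1, fun j hj => (ha1 j hj).trans (ha2 j (hj.trans h)), by rw [← ha2 i1 h]; exact hl1⟩
  · exact ⟨i1, fun j hj => (ha1 j hj).trans (ha2 j hj), hl2.trans hl1⟩
  · exact ⟨i2, fun j hj => (ha1 j (hj.trans h)).trans (ha2 j hj), by rw [ha1 i2 h]; exact hl2⟩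

theorem lexGT_ne {x y : Equiv.Perm ℕ} (h : LexGT x y) : x ≠ y := by
  rintro rfl; exact lexGT_irrefl x h

theorem lexGT_transfer {p q : Equiv.Perm ℕ} {r : ℕ} (hq : q⁻¹ (r + 1) < q⁻¹ r)
    (h : LexGT p q) : LexGT (Equiv.swap r (r + 1) * p) (Equiv.swap r (r + 1) * q) := by
  obtain ⟨i, hag, hlt⟩ := h
  refine ⟨i, fun j hj => ?_, ?_⟩
  · show Equiv.swap r (r+1) (p j) = Equiv.swap r (r+1) (q j)
    rw [hag j hj]
  · show Equiv.swap r (r+1) (q i) < Equiv.swap r (r+1) (p i)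
    have hbad : ¬ (q i = r ∧ p i = r + 1) := by
      rintro ⟨h1, h2⟩
      have hi : q⁻¹ r = i := by rw [← h1, perm_inv_apply_self]
      set j2 := q⁻¹ (r + 1) with hj2
      have hq2 : q j2 = r + 1 := perm_apply_inv_self q (r+1)
      have hj2i : j2 < i := by omega
      have : p j2 = r + 1 := by rw [hag j2 hj2i, hq2]
      have := p.injective (this.trans h2.symm)
      omega
    have hbad' : q i ≠ r ∨ p i ≠ r + 1 := not_and_or.mp hbad
    rw [swap_nat_apply, swap_nat_apply]
    rcases hbad' with h' | h' <;> split_ifs <;> omega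

end Lex
section SlotLemmas

variable {y : Equiv.Perm ℕ} {r a : ℕ}
variable (hdec : ∀ i j, i < j → j ≤ r → y j < y i)
variable (ha : code y (r + 1) = a) (haa : a ≤ r)

include hdec ha haa

theorem code_v_lt {j : ℕ} (hj : j < r) :
    code (y * Equiv.swap r (r + 1)) j = code y j :=
  code_mul_eq_of_fix_le fun i hi => Equiv.swap_apply_of_ne_of_ne (by omega) (by omega)

theorem code_v_r : code (y * Equiv.swap r (r + 1)) r = a := by
  have h1 : (y * Equiv.swap r (r + 1)) r = y (r + 1) := by
    show y (Equiv.swap r (r+1) r) = y (r+1)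
    rw [Equiv.swap_apply_left]
  have hflt : (Finset.range r).filter
      (fun i => (y * Equiv.swap r (r+1)) r < (y * Equiv.swap r (r+1)) i) = Finset.range a := by
    ext i
    simp only [Finset.mem_filter, Finset.mem_range]
    have h2 : i < r → (y * Equiv.swap r (r+1)) i = y i := fun hir => by
      show y (Equiv.swap r (r+1) i) = y i
      rw [Equiv.swap_apply_of_ne_of_ne (by omega) (by omega)]
    constructor
    · rintro ⟨hir, hlt⟩
      rw [h1, h2 hir] at hlt
      exact (code_succ_char hdec ha haa i (by omega)).1 hlt
    · intro hia
      have hir : i < r := by omega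
      refine ⟨hir, ?_⟩
      rw [h1, h2 hir]
      exact (code_succ_char hdec ha haa i (by omega)).2 hia
  rw [code, hflt, Finset.card_range]

theorem code_v_r1 : code (y * Equiv.swap r (r + 1)) (r + 1) = r + 1 := by
  apply code_eq_self_iff.2
  intro i hi
  have h1 : (y * Equiv.swap r (r + 1)) (r + 1) = y r := by
    show y (Equiv.swap r (r+1) (r+1)) = y r
    rw [Equiv.swap_apply_right]
  rw [h1]
  rcases eq_or_ne i r with hir | hir
  · have h2 : (y * Equiv.swap r (r+1)) i = y (r + 1) := by
      rw [hir]
      show y (Equiv.swap r (r+1) r) = y (r+1)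
      rw [Equiv.swap_apply_left]
    rw [h2]
    exact ascent_at_r hdec ha haa
  · have h2 : (y * Equiv.swap r (r+1)) i = y i := by
      show y (Equiv.swap r (r+1) i) = y i
      rw [Equiv.swap_apply_of_ne_of_ne hir (by omega)]
    rw [h2]
    exact hdec i r (by omega) le_rfl

theorem code_v_ge {j : ℕ} (hj : r + 2 ≤ j) :
    code (y * Equiv.swap r (r + 1)) j = code y j :=
  code_mul_eq_of_fix_ge fun i hi => Equiv.swap_apply_of_ne_of_ne (by omega) (by omega)

end SlotLemmas

theorem sigma_apply {r a : ℕ} (ha1 : 1 ≤ a) (haa : a ≤ r) (i : ℕ) :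
    (Equiv.swap (a - 1) (r + 1) * Equiv.swap r (r + 1)) i =
      if i = a - 1 then r + 1 else if i = r then a - 1 else if i = r + 1 then r else i := by
  rw [Equiv.Perm.mul_apply, swap_nat_apply, Equiv.swap_apply_def]
  split_ifs <;> omega

theorem sigma_inv_apply {r a : ℕ} (ha1 : 1 ≤ a) (haa : a ≤ r) (i : ℕ) :
    ((Equiv.swap (a - 1) (r + 1) * Equiv.swap r (r + 1))⁻¹) i =
      if i = r + 1 then a - 1 else if i = a - 1 then r else if i = r then r + 1 else i := by
  rw [mul_inv_rev, Equiv.swap_inv, Equiv.swap_inv, Equiv.Perm.mul_apply,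
    Equiv.swap_apply_def, Equiv.swap_apply_def]
  split_ifs <;> omega

section SlotLemmas2

variable {y : Equiv.Perm ℕ} {r a : ℕ}
variable (hdec : ∀ i j, i < j → j ≤ r → y j < y i)
variable (ha : code y (r + 1) = a) (haa : a ≤ r) (ha1 : 1 ≤ a)

include hdec ha haa ha1

theorem yσ_apply : ∀ p : ℕ,
    (y * (Equiv.swap (a - 1) (r + 1) * Equiv.swap r (r + 1))) p =
      if p = a - 1 then y (r + 1) else if p = r then y (a - 1)
        else if p = r + 1 then y r else y p := by
  intro p
  show y ((Equiv.swap (a - 1) (r + 1) * Equiv.swap r (r + 1)) p) = _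
  rw [sigma_apply ha1 haa]
  split_ifs <;> rfl

theorem code_w'_lt {j : ℕ} (hj : j < r) :
    code (y * (Equiv.swap (a - 1) (r + 1) * Equiv.swap r (r + 1))) j = j := by
  apply code_eq_self_iff.2
  intro i hi
  have hchar := code_succ_char hdec ha haa
  have happ := yσ_apply hdec ha haa ha1
  rcases eq_or_ne j (a - 1) with hja | hja
  · have hyj : (y * (Equiv.swap (a-1) (r+1) * Equiv.swap r (r+1))) j = y (r + 1) := by
      rw [happ, if_pos hja]
    have hyi : (y * (Equiv.swap (a-1) (r+1) * Equiv.swap r (r+1))) i = y i := by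
      rw [happ, if_neg (by omega), if_neg (by omega), if_neg (by omega)]
    rw [hyj, hyi]
    exact (hchar i (by omega)).2 (by omega)
  · have hyj : (y * (Equiv.swap (a-1) (r+1) * Equiv.swap r (r+1))) j = y j := by
      rw [happ, if_neg hja, if_neg (by omega), if_neg (by omega)]
    rw [hyj]
    rcases eq_or_ne i (a - 1) with hia | hia
    · have hyi : (y * (Equiv.swap (a-1) (r+1) * Equiv.swap r (r+1))) i = y (r + 1) := by
        rw [happ, if_pos hia]
      rw [hyi]
      have h1 : ¬ (y (r + 1) < y j) := fun hh => by
        have := (hchar j (by omega)).1 hh; omega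
      have h2 : y j ≠ y (r + 1) := fun hh => by
        have := y.injective hh; omega
      omega
    · have hyi : (y * (Equiv.swap (a-1) (r+1) * Equiv.swap r (r+1))) i = y i := by
        rw [happ, if_neg hia, if_neg (by omega), if_neg (by omega)]
      rw [hyi]
      exact hdec i j hi (by omega)

theorem code_w'_r :
    code (y * (Equiv.swap (a - 1) (r + 1) * Equiv.swap r (r + 1))) r = a - 1 := by
  have hchar := code_succ_char hdec ha haa
  have happ := yσ_apply hdec ha haa ha1
  have hyr : (y * (Equiv.swap (a-1) (r+1) * Equiv.swap r (r+1))) r = y (a - 1) := by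
    rw [happ, if_neg (by omega), if_pos rfl]
  have hflt : (Finset.range r).filter
      (fun i => (y * (Equiv.swap (a - 1) (r + 1) * Equiv.swap r (r + 1))) r
        < (y * (Equiv.swap (a - 1) (r + 1) * Equiv.swap r (r + 1))) i)
      = Finset.range (a - 1) := by
    ext i
    simp only [Finset.mem_filter, Finset.mem_range]
    constructor
    · rintro ⟨hir, hlt⟩
      rw [hyr] at hlt
      rcases eq_or_ne i (a - 1) with hia | hia
      · rw [happ, if_pos hia] at hlt
        have := (hchar (a - 1) (by omega)).2 (by omega)
        omega
      · rw [happ, if_neg hia, if_neg (by omega), if_neg (by omega)] at hlt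
        by_contra hc
        have : y i < y (a - 1) := hdec (a - 1) i (by omega) (by omega)
        omega
    · intro hia
      refine ⟨by omega, ?_⟩
      rw [hyr, happ, if_neg (by omega), if_neg (by omega), if_neg (by omega)]
      exact hdec i (a - 1) (by omega) (by omega)
  rw [code, hflt, Finset.card_range]

theorem code_w'_r1 :
    code (y * (Equiv.swap (a - 1) (r + 1) * Equiv.swap r (r + 1))) (r + 1) = r + 1 := by
  apply code_eq_self_iff.2
  intro i hi
  have hmin := min_prefix hdec ha haa
  have happ := yσ_apply hdec ha haa ha1
  have hyr1 : (y * (Equiv.swap (a-1) (r+1) * Equiv.swap r (r+1))) (r + 1) = y r := by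
    rw [happ, if_neg (by omega), if_neg (by omega), if_pos rfl]
  rw [hyr1]
  rcases eq_or_ne i (a - 1) with h1 | h1
  · rw [happ, if_pos h1]
    exact hmin (r + 1) le_rfl (by omega)
  · rcases eq_or_ne i r with h2 | h2
    · rw [happ, if_neg h1, if_pos h2]
      exact hmin (a - 1) (by omega) (by omega)
    · rw [happ, if_neg h1, if_neg h2, if_neg (by omega)]
      exact hmin i (by omega) h2

theorem code_w'_ge {j : ℕ} (hj : r + 2 ≤ j) :
    code (y * (Equiv.swap (a - 1) (r + 1) * Equiv.swap r (r + 1))) j = code y j :=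
  code_mul_eq_of_fix_ge fun i hi => by rw [sigma_apply ha1 haa]; split_ifs <;> omega

omit ha1 in
theorem lexA : LexGT ((y * Equiv.swap r (r + 1))⁻¹) y⁻¹ := by
  have hasc := ascent_at_r hdec ha haa
  have happ : ∀ q, (y * Equiv.swap r (r + 1))⁻¹ q = Equiv.swap r (r + 1) (y⁻¹ q) := by
    intro q
    rw [mul_inv_rev, Equiv.swap_inv, Equiv.Perm.mul_apply]
  refine ⟨y r, ?_, ?_⟩
  · intro q hq
    rw [happ]
    apply Equiv.swap_apply_of_ne_of_ne
    · intro h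
      have := congrArg y h
      rw [perm_apply_inv_self] at this
      omega
    · intro h
      have := congrArg y h
      rw [perm_apply_inv_self] at this
      omega
  · rw [happ, perm_inv_apply_self, Equiv.swap_apply_left]
    omega

theorem lexB : LexGT ((y * (Equiv.swap (a - 1) (r + 1) * Equiv.swap r (r + 1)))⁻¹) y⁻¹ := by
  have hasc := ascent_at_r hdec ha haa
  have happ : ∀ q, (y * (Equiv.swap (a - 1) (r + 1) * Equiv.swap r (r + 1)))⁻¹ q
      = ((Equiv.swap (a - 1) (r + 1) * Equiv.swap r (r + 1))⁻¹) (y⁻¹ q) := by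
    intro q
    rw [mul_inv_rev, Equiv.Perm.mul_apply]
  refine ⟨y r, ?_, ?_⟩
  · intro q hq
    rw [happ, sigma_inv_apply ha1 haa]
    have e1 : y⁻¹ q ≠ r + 1 := by
      intro h
      have := congrArg y h
      rw [perm_apply_inv_self] at this
      omega
    have e2 : y⁻¹ q ≠ a - 1 := by
      intro h
      have := congrArg y h
      rw [perm_apply_inv_self] at this
      have : y r < y (a - 1) := hdec (a - 1) r (by omega) le_rfl
      omega
    have e3 : y⁻¹ q ≠ r := by
      intro h
      have := congrArg y h
      rw [perm_apply_inv_self] at this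
      omega
    rw [if_neg e1, if_neg e2, if_neg e3]
  · rw [happ, perm_inv_apply_self, sigma_inv_apply ha1 haa]
    rw [if_neg (by omega : ¬ r = r + 1), if_neg (by omega : ¬ r = a - 1), if_pos rfl]
    omega

end SlotLemmas2

section FinLemmas

variable {n : ℕ}

theorem extN_swap' {b1 b2 : ℕ} (h1 : b1 < n) (h2 : b2 < n) :
    extN (Equiv.swap (⟨b1, h1⟩ : Fin n) ⟨b2, h2⟩) = Equiv.swap b1 b2 := by
  ext i
  rcases lt_or_ge i n with hi | hi
  · rw [extN_apply_lt _ hi]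
    have hval : (Equiv.swap (⟨b1, h1⟩ : Fin n) ⟨b2, h2⟩ ⟨i, hi⟩ : ℕ)
        = if i = b1 then b2 else if i = b2 then b1 else i := by
      rw [Equiv.swap_apply_def]
      split_ifs <;> simp_all [Fin.ext_iff]
    rw [hval, Equiv.swap_apply_def]
  · rw [extN_apply_ge _ hi, Equiv.swap_apply_of_ne_of_ne (by omega) (by omega)]

theorem no_descent_eq_one (u : Equiv.Perm (Fin n))
    (hc : ∀ r, r + 1 < n → extN u r < extN u (r + 1)) : u = 1 := by
  have hmono : ∀ p, extN u p ≤ extN u (p + 1) := by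
    intro p
    rcases lt_or_ge (p + 1) n with h | h
    · exact le_of_lt (hc p h)
    · rw [extN_apply_ge u h]
      rcases lt_or_ge p n with h' | h'
      · have := extN_lt u h'; omega
      · rw [extN_apply_ge u h']; omega
  have hmo : Monotone (⇑(extN u)) := monotone_nat_of_le_succ hmono
  have hsm : StrictMono (⇑(extN u)) := hmo.strictMono_of_injective (extN u).injective
  have hid : ∀ k, extN u k = k := by
    intro k
    induction k using Nat.strong_induction_on with
    | _ k ih =>
      have hge : k ≤ extN u k := hsm.le_apply
      set j := (extN u)⁻¹ k with hj
      have hjk : extN u j = k := perm_apply_inv_self _ k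
      rcases lt_trichotomy j k with h | h | h
      · rw [ih j h] at hjk; omega
      · rw [← h, hjk]; exact h.symm
      · have := hsm h
        rw [hjk] at this
        omega
  ext i
  have h1 : extN u i = (u ⟨i, i.2⟩ : Fin n) := extN_apply_lt u i.2
  have h2 : (⟨(i : ℕ), i.2⟩ : Fin n) = i := rfl
  rw [h2] at h1
  have := hid i
  rw [h1] at this
  simpa [Fin.ext_iff] using this

theorem exists_descent (u : Equiv.Perm (Fin n)) (hu : u ≠ 1) :
    ∃ r, r + 1 < n ∧ extN u (r + 1) < extN u r := by
  by_contra hcon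
  push_neg at hcon
  apply hu
  apply no_descent_eq_one
  intro r hr
  have h1 := hcon r hr
  have hne : extN u r ≠ extN u (r + 1) := fun h => by
    have := (extN u).injective h; omega
  omega

theorem ell_zero_eq_one (u : Equiv.Perm (Fin n)) (h : ell (extN u) = 0) : u = 1 := by
  by_contra hu
  obtain ⟨r, hr, hdesc⟩ := exists_descent u hu
  have hmem : ((r, r+1) : ℕ × ℕ) ∈ InvSet (extN u) := ⟨by omega, hdesc⟩
  have hfin := invSet_finite (finSupp_extN u)
  rw [ell_eq, Set.ncard_eq_zero hfin] at h
  rw [h] at hmem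
  exact hmem

theorem decreasing_perm_val (u : Equiv.Perm (Fin n))
    (hdec : ∀ i j, i < j → j < n → extN u j < extN u i) :
    ∀ i, i < n → extN u i = n - 1 - i := by
  intro i hi
  set w2 : Equiv.Perm (Fin n) := Fin.revPerm * u with hw2
  have hw2v : ∀ p, p < n → extN w2 p = n - 1 - extN u p := by
    intro p hp
    rw [extN_apply_lt w2 hp, extN_apply_lt u hp]
    show ((Fin.revPerm (u ⟨p, hp⟩) : Fin n) : ℕ) = _
    rw [Fin.revPerm_apply, Fin.val_rev]
    omega
  have hone : w2 = 1 := by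
    apply no_descent_eq_one
    intro r hr
    rw [hw2v r (by omega), hw2v (r + 1) hr]
    have h1 := hdec r (r + 1) (by omega) hr
    have h2 := extN_lt u (show r < n by omega)
    omega
  have := hw2v i hi
  rw [hone] at this
  have h1 : extN (1 : Equiv.Perm (Fin n)) i = i := by rw [extN_one]; rfl
  rw [h1] at this
  have h2 := extN_lt u hi
  omega

end FinLemmas
theorem ell_one : ell (1 : Equiv.Perm ℕ) = 0 := by
  have h : InvSet (1 : Equiv.Perm ℕ) = ∅ := by
    ext ⟨i, j⟩
    simp only [InvSet, Set.mem_setOf_eq, Set.mem_empty_iff_false, iff_false, not_and]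
    intro h1
    show ¬ ((1 : Equiv.Perm ℕ) j < (1 : Equiv.Perm ℕ) i)
    simp only [Equiv.Perm.one_apply]
    omega
  rw [ell_eq, h, Set.ncard_empty]

section Main

variable {n : ℕ} (S : Equiv.Perm ℕ → MvPolynomial ℕ ℤ)

variable (hdom : ∀ (v : Equiv.Perm ℕ) (m : ℕ), (∀ i, m ≤ i → v i = i) →
      (∀ i j, i < j → j < m → v j < v i) →
      S v = ∏ i ∈ Finset.range m, X i ^ (v i))

variable (hrec : ∀ (v : Equiv.Perm ℕ) (i : ℕ), FinSupp v →
      ell (v * Equiv.swap i (i + 1)) < ell v →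
      (X i - X (i + 1)) * S (v * Equiv.swap i (i + 1))
        = S v - rename (⇑(Equiv.swap i (i + 1))) (S v))

include hrec in
theorem transfer (d : Equiv.Perm (Fin n) → ℤ) {r : ℕ} (hr : r + 1 < n) :
    (∑ u : Equiv.Perm (Fin n), d u • S (extN u))
      - rename (⇑(Equiv.swap r (r + 1))) (∑ u : Equiv.Perm (Fin n), d u • S (extN u))
    = (X r - X (r + 1)) *
      ∑ x : Equiv.Perm (Fin n),
        (if extN x r < extN x (r + 1)
          then d (x * Equiv.swap (⟨r, by omega⟩ : Fin n) ⟨r + 1, hr⟩) else 0)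
          • S (extN x) := by
  classical
  set sFr : Equiv.Perm (Fin n) := Equiv.swap (⟨r, by omega⟩ : Fin n) ⟨r + 1, hr⟩ with hsFr
  have hext : ∀ x : Equiv.Perm (Fin n), extN (x * sFr) = extN x * Equiv.swap r (r + 1) := by
    intro x
    rw [extN_mul, hsFr, extN_swap' (by omega) hr]
  have hsFr2 : ∀ x : Equiv.Perm (Fin n), x * sFr * sFr = x := by
    intro x
    rw [mul_assoc, hsFr, Equiv.swap_mul_self, mul_one]
  -- pointwise difference
  have hterm : ∀ u : Equiv.Perm (Fin n),
      d u • S (extN u) - rename (⇑(Equiv.swap r (r + 1))) (d u • S (extN u))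
      = (X r - X (r + 1)) *
          (if extN u (r + 1) < extN u r then d u • S (extN (u * sFr)) else 0) := by
    intro u
    have hsmul : rename (⇑(Equiv.swap r (r + 1))) (d u • S (extN u))
        = d u • rename (⇑(Equiv.swap r (r + 1))) (S (extN u)) := by
      rw [zsmul_eq_mul, zsmul_eq_mul, map_mul, map_intCast]
    rw [hsmul]
    rcases lt_trichotomy (extN u (r + 1)) (extN u r) with hlt | heq | hgt
    · rw [if_pos hlt, ← smul_sub, S_descent S hrec (finSupp_extN u) hlt, ← hext u]
      rw [zsmul_eq_mul, zsmul_eq_mul, mul_left_comm]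
    · exact absurd ((extN u).injective heq) (by omega)
    · rw [if_neg (by omega), S_invariant_of_ascent S hrec (finSupp_extN u) hgt,
        sub_self, mul_zero]
  rw [map_sum, ← Finset.sum_sub_distrib]
  rw [Finset.sum_congr rfl fun u _ => hterm u, ← Finset.mul_sum]
  congr 1
  -- reindex
  apply Finset.sum_nbij' (fun u => u * sFr) (fun x => x * sFr)
  · intro u _; exact Finset.mem_univ _
  · intro u _; exact Finset.mem_univ _
  · intro u _; exact hsFr2 u
  · intro u _; exact hsFr2 u
  · intro u _
    have h1 : extN (u * sFr) r = extN u (r + 1) := by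
      rw [hext u]
      show extN u (Equiv.swap r (r+1) r) = extN u (r + 1)
      rw [Equiv.swap_apply_left]
    have h2 : extN (u * sFr) (r + 1) = extN u r := by
      rw [hext u]
      show extN u (Equiv.swap r (r+1) (r+1)) = extN u r
      rw [Equiv.swap_apply_right]
    rw [h1, h2, hsFr2 u]
    rcases lt_or_ge (extN u (r + 1)) (extN u r) with h | h
    · rw [if_pos h, if_pos h]
    · rw [if_neg (by omega), if_neg (by omega), zero_smul]

include hdom hrec in
theorem indep : ∀ (k : ℕ) (d : Equiv.Perm (Fin n) → ℤ),
    (∀ u, d u ≠ 0 → ell (extN u) ≤ k) →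
    (∑ u : Equiv.Perm (Fin n), d u • S (extN u)) = 0 →
    ∀ u, d u = 0 := by
  intro k
  induction k with
  | zero =>
    intro d hbound hsum u
    by_contra hdu
    have hu1 : u = 1 := ell_zero_eq_one u (by have := hbound u hdu; omega)
    have hS1 : S (extN (1 : Equiv.Perm (Fin n))) = 1 := by
      rw [extN_one, hdom 1 0 (fun i _ => rfl) (fun i j h1 h2 => by omega)]
      simp
    have hsum2 : (∑ x : Equiv.Perm (Fin n), d x • S (extN x))
        = d 1 • (1 : MvPolynomial ℕ ℤ) := by
      rw [Finset.sum_eq_single 1]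
      · rw [hS1]
      · intro b _ hb
        have hdb : d b = 0 := by
          by_contra hdb
          exact hb (ell_zero_eq_one b (by have := hbound b hdb; omega))
        rw [hdb, zero_smul]
      · intro hmem; exact absurd (Finset.mem_univ 1) hmem
    rw [hsum2, zsmul_eq_mul, mul_one, Int.cast_eq_zero] at hsum
    rw [hu1] at hdu
    exact hdu hsum
  | succ k ih =>
    intro d hbound hsum u
    have htop : ∀ u0, ell (extN u0) = k + 1 → d u0 = 0 := by
      intro u0 hu0
      have hne1 : u0 ≠ 1 := by
        intro h
        rw [h, extN_one, ell_one] at hu0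
        omega
      obtain ⟨r, hr, hdesc⟩ := exists_descent u0 hne1
      set sFr : Equiv.Perm (Fin n) := Equiv.swap (⟨r, by omega⟩ : Fin n) ⟨r + 1, hr⟩ with hsFr
      have hext : ∀ x : Equiv.Perm (Fin n), extN (x * sFr) = extN x * Equiv.swap r (r + 1) := by
        intro x
        rw [extN_mul, hsFr, extN_swap' (by omega) hr]
      set d' : Equiv.Perm (Fin n) → ℤ :=
        fun x => if extN x r < extN x (r + 1) then d (x * sFr) else 0 with hd'
      have hsum' : (∑ x : Equiv.Perm (Fin n), d' x • S (extN x)) = 0 := by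
        have ht := transfer S hrec d hr
        rw [hsum, map_zero, sub_zero] at ht
        rcases mul_eq_zero.1 ht.symm with h0 | h0
        · exact absurd h0 (X_sub_ne_zero r)
        · exact h0
      have hbound' : ∀ x, d' x ≠ 0 → ell (extN x) ≤ k := by
        intro x hx
        simp only [hd'] at hx
        by_cases hax : extN x r < extN x (r + 1)
        · rw [if_pos hax] at hx
          have h1 := hbound _ hx
          have h2 : ell (extN (x * sFr)) = ell (extN x) + 1 := by
            rw [hext x]
            exact ell_swap_of_ascent (finSupp_extN x) hax
          omega
        · rw [if_neg hax] at hx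
          exact absurd rfl hx
      have hval := ih d' hbound' hsum' (u0 * sFr)
      simp only [hd'] at hval
      have ha : extN (u0 * sFr) r < extN (u0 * sFr) (r + 1) := by
        have h1 : extN (u0 * sFr) r = extN u0 (r + 1) := by
          rw [hext u0]
          show extN u0 (Equiv.swap r (r+1) r) = extN u0 (r + 1)
          rw [Equiv.swap_apply_left]
        have h2 : extN (u0 * sFr) (r + 1) = extN u0 r := by
          rw [hext u0]
          show extN u0 (Equiv.swap r (r+1) (r+1)) = extN u0 r
          rw [Equiv.swap_apply_right]
        omega
      rw [if_pos ha, mul_assoc, Equiv.swap_mul_self, mul_one] at hval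
      exact hval
    rcases eq_or_ne (ell (extN u)) (k + 1) with he | he
    · exact htop u he
    · set e : Equiv.Perm (Fin n) → ℤ :=
        fun x => if ell (extN x) = k + 1 then 0 else d x with hee
      have hsum_e : (∑ x : Equiv.Perm (Fin n), e x • S (extN x)) = 0 := by
        rw [← hsum]
        apply Finset.sum_congr rfl
        intro x _
        simp only [hee]
        rcases eq_or_ne (ell (extN x)) (k + 1) with hx | hx
        · rw [if_pos hx, htop x hx]
        · rw [if_neg hx]
      have hbound_e : ∀ x, e x ≠ 0 → ell (extN x) ≤ k := by
        intro x hx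
        simp only [hee] at hx
        rcases eq_or_ne (ell (extN x)) (k + 1) with hx2 | hx2
        · rw [if_pos hx2] at hx; exact absurd rfl hx
        · rw [if_neg hx2] at hx
          have := hbound x hx
          omega
      have := ih e hbound_e hsum_e u
      simp only [hee, if_neg he] at this
      exact this

end Main
noncomputable def mu {n : ℕ} (w : Equiv.Perm (Fin n)) : ℕ :=
  Set.ncard {z : Equiv.Perm (Fin n) | LexGT (extN z⁻¹) (extN w⁻¹)}

theorem mu_lt_of_lexGT {n : ℕ} {v w : Equiv.Perm (Fin n)}
    (h : LexGT (extN v⁻¹) (extN w⁻¹)) : mu v < mu w := by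
  have hss : {z : Equiv.Perm (Fin n) | LexGT (extN z⁻¹) (extN v⁻¹)}
      ⊂ {z : Equiv.Perm (Fin n) | LexGT (extN z⁻¹) (extN w⁻¹)} := by
    rw [Set.ssubset_def]
    constructor
    · intro z hz
      exact lexGT_trans hz h
    · intro hsub
      exact lexGT_irrefl _ (hsub (show v ∈ _ from h))
  exact Set.ncard_lt_ncard hss (Set.toFinite _)

theorem prod_factor {n r : ℕ} (hrn : r + 1 < n) (g : ℕ → MvPolynomial ℕ ℤ) :
    ∏ i ∈ Finset.range n, g i
      = g r * g (r + 1) * ∏ i ∈ ((Finset.range n).erase r).erase (r + 1), g i := by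
  have h1 : r ∈ Finset.range n := Finset.mem_range.2 (by omega)
  rw [← Finset.mul_prod_erase _ g h1]
  have h2 : r + 1 ∈ (Finset.range n).erase r :=
    Finset.mem_erase.2 ⟨by omega, Finset.mem_range.2 hrn⟩
  rw [← Finset.mul_prod_erase _ g h2, ← mul_assoc]

theorem staircase (n : ℕ) :
    ∏ i ∈ Finset.range n, ∏ j ∈ Finset.range i, (X j : MvPolynomial ℕ ℤ)
      = ∏ i ∈ Finset.range n, (X i : MvPolynomial ℕ ℤ) ^ (n - 1 - i) := by
  induction n with
  | zero => simp
  | succ n ih =>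
    rw [Finset.prod_range_succ _ n, ih, ← Finset.prod_mul_distrib]
    have hr : ∀ i ∈ Finset.range n,
        (X i : MvPolynomial ℕ ℤ) ^ (n - 1 - i) * X i = X i ^ (n + 1 - 1 - i) := by
      intro i hi
      rw [Finset.mem_range] at hi
      rw [← pow_succ]
      congr 1
      omega
    rw [Finset.prod_congr rfl hr,
      Finset.prod_range_succ (fun i => (X i : MvPolynomial ℕ ℤ) ^ (n + 1 - 1 - i)) n,
      show n + 1 - 1 - n = 0 by omega, pow_zero, mul_one]

section Main2

variable {n : ℕ} (S : Equiv.Perm ℕ → MvPolynomial ℕ ℤ)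

variable (hdom : ∀ (v : Equiv.Perm ℕ) (m : ℕ), (∀ i, m ≤ i → v i = i) →
      (∀ i j, i < j → j < m → v j < v i) →
      S v = ∏ i ∈ Finset.range m, X i ^ (v i))

variable (hrec : ∀ (v : Equiv.Perm ℕ) (i : ℕ), FinSupp v →
      ell (v * Equiv.swap i (i + 1)) < ell v →
      (X i - X (i + 1)) * S (v * Equiv.swap i (i + 1))
        = S v - rename (⇑(Equiv.swap i (i + 1))) (S v))

set_option maxHeartbeats 2000000 in
include hdom hrec in
theorem main_step (w : Equiv.Perm (Fin n))
    (IH : ∀ v : Equiv.Perm (Fin n), mu v < mu w →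
      ∃ m : Equiv.Perm (Fin n) → ℤ,
        (∏ i ∈ Finset.range n, esymmRange i (code (extN v) i))
          = (∑ u : Equiv.Perm (Fin n), m u • S (extN u)) ∧
        m v = 1 ∧ ∀ u, m u ≠ 0 → u = v ∨ LexGT (extN u⁻¹) (extN v⁻¹)) :
    ∃ m : Equiv.Perm (Fin n) → ℤ,
      (∏ i ∈ Finset.range n, esymmRange i (code (extN w) i))
        = (∑ u : Equiv.Perm (Fin n), m u • S (extN u)) ∧
      m w = 1 ∧ ∀ u, m u ≠ 0 → u = w ∨ LexGT (extN u⁻¹) (extN w⁻¹) := by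
  classical
  by_cases hdomi : ∀ j, 1 ≤ j → j < n → code (extN w) j = j
  · -- dominant case
    refine ⟨fun u => if u = w then 1 else 0, ?_, by simp, ?_⟩
    · have hdecw : ∀ i j, i < j → j < n → extN w j < extN w i := by
        intro i j hij hjn
        have hcode : code (extN w) j = j := by
          rcases Nat.eq_zero_or_pos j with rfl | hj
          · omega
          · exact hdomi j hj hjn
        exact code_eq_self_iff.1 hcode i hij
      have hSw := hdom (extN w) n (fun i hi => extN_apply_ge w hi) hdecw
      have hsum : (∑ u : Equiv.Perm (Fin n), (if u = w then (1:ℤ) else 0) • S (extN u))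
          = S (extN w) := by
        rw [Finset.sum_eq_single w]
        · simp
        · intro b _ hb
          rw [if_neg hb, zero_smul]
        · intro hmem; exact absurd (Finset.mem_univ w) hmem
      rw [hsum, hSw]
      have hval := decreasing_perm_val w hdecw
      have hcode : ∀ i, i < n → code (extN w) i = i := by
        intro i hi
        rcases Nat.eq_zero_or_pos i with rfl | h
        · exact code_zero _
        · exact hdomi i h hi
      calc ∏ i ∈ Finset.range n, esymmRange i (code (extN w) i)
          = ∏ i ∈ Finset.range n, ∏ j ∈ Finset.range i, (X j : MvPolynomial ℕ ℤ) := by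
            apply Finset.prod_congr rfl
            intro i hi
            rw [hcode i (Finset.mem_range.1 hi), esymmRange_self]
        _ = ∏ i ∈ Finset.range n, (X i : MvPolynomial ℕ ℤ) ^ (n - 1 - i) := staircase n
        _ = ∏ i ∈ Finset.range n, X i ^ (extN w i) := by
            apply Finset.prod_congr rfl
            intro i hi
            rw [hval i (Finset.mem_range.1 hi)]
    · intro u hu
      left
      by_contra hne
      have hu' : (if u = w then (1:ℤ) else 0) ≠ 0 := hu
      rw [if_neg hne] at hu'
      exact hu' rfl
  · -- non-dominant
    push_neg at hdomi
    set y := extN w with hy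
    have hP : ∃ j, 1 ≤ j ∧ j < n ∧ code y j ≠ j := by
      obtain ⟨j0, h1, h2, h3⟩ := hdomi
      exact ⟨j0, h1, h2, h3⟩
    set j1 := Nat.find hP with hj1
    obtain ⟨hj11, hj1n, hj1ne⟩ := Nat.find_spec hP
    set r := j1 - 1 with hrdef
    have hrr1 : r + 1 = j1 := by omega
    have hrn : r + 1 < n := by omega
    have hpre : ∀ j, j ≤ r → code y j = j := by
      intro j hj
      rcases Nat.eq_zero_or_pos j with rfl | hjp
      · exact code_zero y
      · by_contra hc
        exact Nat.find_min hP (show j < j1 by omega) ⟨hjp, by omega, hc⟩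
    have hdec : ∀ i j, i < j → j ≤ r → y j < y i := by
      intro i j hij hjr
      exact code_eq_self_iff.1 (hpre j hjr) i hij
    set a := code y (r + 1) with hadef
    have ha : code y (r + 1) = a := rfl
    have haa : a ≤ r := by
      have h1 := code_le y (r + 1)
      have h2 : code y (r + 1) ≠ r + 1 := by rw [hrr1]; exact hj1ne
      omega
    set sFr : Equiv.Perm (Fin n) := Equiv.swap (⟨r, by omega⟩ : Fin n) ⟨r + 1, hrn⟩ with hsFr
    set v := w * sFr with hv
    have hextv : extN v = y * Equiv.swap r (r + 1) := by
      rw [hv, extN_mul, hsFr, extN_swap' (by omega) hrn, hy]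
    have hlexv : LexGT (extN v⁻¹) (extN w⁻¹) := by
      rw [extN_inv, extN_inv, hextv, ← hy]
      exact lexA hdec ha haa
    obtain ⟨mv, hmv_eq, hmv_diag, hmv_supp⟩ := IH v (mu_lt_of_lexGT hlexv)
    have hcv : ∀ i, code (extN v) i
        = if i = r then a else if i = r + 1 then r + 1 else code y i := by
      intro i
      rcases eq_or_ne i r with hir | hir
      · rw [if_pos hir, hir, hextv]
        exact code_v_r hdec ha haa
      rcases eq_or_ne i (r + 1) with hir1 | hir1
      · rw [if_neg hir, if_pos hir1, hir1, hextv]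
        exact code_v_r1 hdec ha haa
      · rw [if_neg hir, if_neg hir1, hextv]
        rcases lt_or_ge i r with h | h
        · exact code_v_lt hdec ha haa h
        · exact code_v_ge hdec ha haa (by omega)
    set Cfac := ∏ i ∈ ((Finset.range n).erase r).erase (r + 1), esymmRange i (code y i)
      with hC
    have hAv : ∏ i ∈ Finset.range n, esymmRange i (code (extN v) i)
        = esymmRange r a * esymmRange (r + 1) (r + 1) * Cfac := by
      rw [prod_factor hrn (fun i => esymmRange i (code (extN v) i)), hcv r, if_pos rfl,
        hcv (r + 1), if_neg (by omega : ¬ r + 1 = r), if_pos rfl]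
      congr 1
      apply Finset.prod_congr rfl
      intro i hi
      rw [Finset.mem_erase] at hi
      obtain ⟨hi1, hi2⟩ := hi
      rw [Finset.mem_erase] at hi2
      rw [hcv i, if_neg hi2.1, if_neg hi1]
    have hCsym : rename (⇑(Equiv.swap r (r + 1))) Cfac = Cfac := by
      rw [hC, map_prod]
      apply Finset.prod_congr rfl
      intro i hi
      rw [Finset.mem_erase] at hi
      exact rename_swap_esymmRange hi.1
    have he_r1 : esymmRange (r + 1) (r + 1) = esymmRange r r * X r := by
      rw [esymmRange_self, esymmRange_self, Finset.prod_range_succ]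
    have he_sym_a : rename (⇑(Equiv.swap r (r + 1))) (esymmRange r a) = esymmRange r a :=
      rename_swap_esymmRange (by omega)
    have he_sym_r : rename (⇑(Equiv.swap r (r + 1))) (esymmRange r r) = esymmRange r r :=
      rename_swap_esymmRange (by omega)
    have hXr : rename (⇑(Equiv.swap r (r + 1))) (X r : MvPolynomial ℕ ℤ) = X (r + 1) := by
      rw [rename_swap_X, Equiv.swap_apply_left]
    set B := esymmRange r a * esymmRange r r * Cfac with hB
    have hstep1 : (∑ u : Equiv.Perm (Fin n), mv u • S (extN u))
        - rename (⇑(Equiv.swap r (r + 1))) (∑ u : Equiv.Perm (Fin n), mv u • S (extN u))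
        = (X r - X (r + 1)) * B := by
      rw [← hmv_eq, hAv, he_r1, map_mul, map_mul, map_mul, hCsym, he_sym_a, he_sym_r, hXr,
        hB]
      ring
    set m1 : Equiv.Perm (Fin n) → ℤ :=
      fun x => if extN x r < extN x (r + 1) then mv (x * sFr) else 0 with hm1
    have hstep2 : (X r - X (r + 1)) * (∑ x : Equiv.Perm (Fin n), m1 x • S (extN x))
        = (X r - X (r + 1)) * B := by
      rw [← hstep1]
      exact (transfer S hrec mv hrn).symm
    have hsum1 : (∑ x : Equiv.Perm (Fin n), m1 x • S (extN x)) = B :=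
      mul_left_cancel₀ (X_sub_ne_zero r) hstep2
    have hascw : extN w r < extN w (r + 1) := by
      rw [← hy]
      exact ascent_at_r hdec ha haa
    have hm1w : m1 w = 1 := by
      simp only [hm1]
      rw [if_pos hascw, ← hv]
      exact hmv_diag
    have hdv : extN v (r + 1) < extN v r := by
      rw [hextv]
      have e3 : (y * Equiv.swap r (r + 1)) (r + 1) = y r := by
        show y (Equiv.swap r (r + 1) (r + 1)) = y r
        rw [Equiv.swap_apply_right]
      have e4 : (y * Equiv.swap r (r + 1)) r = y (r + 1) := by
        show y (Equiv.swap r (r + 1) r) = y (r + 1)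
        rw [Equiv.swap_apply_left]
      rw [e3, e4]
      exact ascent_at_r hdec ha haa
    have hm1supp : ∀ x, m1 x ≠ 0 → x = w ∨ LexGT (extN x⁻¹) (extN w⁻¹) := by
      intro x hx
      simp only [hm1] at hx
      by_cases hax : extN x r < extN x (r + 1)
      · rw [if_pos hax] at hx
        rcases hmv_supp _ hx with he | hlex
        · left
          rw [hv] at he
          exact mul_right_cancel he
        · right
          have hq : (extN v⁻¹)⁻¹ (r + 1) < (extN v⁻¹)⁻¹ r := by
            rw [extN_inv, inv_inv]
            exact hdv
          have h2 := lexGT_transfer hq hlex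
          have e1 : Equiv.swap r (r + 1) * extN ((x * sFr)⁻¹) = extN x⁻¹ := by
            rw [extN_inv, extN_mul, hsFr, extN_swap' (by omega) hrn, mul_inv_rev,
              Equiv.swap_inv, ← mul_assoc, Equiv.swap_mul_self, one_mul, ← extN_inv]
          have e2 : Equiv.swap r (r + 1) * extN (v⁻¹) = extN w⁻¹ := by
            rw [extN_inv, hextv, mul_inv_rev, Equiv.swap_inv, ← mul_assoc,
              Equiv.swap_mul_self, one_mul, hy, ← extN_inv]
          rw [e1, e2] at h2
          exact h2
      · rw [if_neg hax] at hx
        exact absurd rfl hx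
    have hAw : ∏ i ∈ Finset.range n, esymmRange i (code y i)
        = esymmRange r r * esymmRange (r + 1) a * Cfac := by
      rw [prod_factor hrn (fun i => esymmRange i (code y i)), hpre r le_rfl, ← hadef]
    rcases Nat.eq_zero_or_pos a with ha0 | ha1
    · refine ⟨m1, ?_, hm1w, hm1supp⟩
      rw [hsum1, hAw, hB, ha0, esymmRange_zero, esymmRange_zero]
      ring
    · set σ1 : Equiv.Perm (Fin n) := Equiv.swap (⟨a - 1, by omega⟩ : Fin n) ⟨r + 1, hrn⟩
        with hσ1
      set w2 := w * (σ1 * sFr) with hw2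
      have hextw2 : extN w2
          = y * (Equiv.swap (a - 1) (r + 1) * Equiv.swap r (r + 1)) := by
        rw [hw2, extN_mul, extN_mul, hσ1, hsFr, extN_swap' (by omega) hrn,
          extN_swap' (by omega) hrn, hy]
      have hlexw2 : LexGT (extN w2⁻¹) (extN w⁻¹) := by
        rw [extN_inv, extN_inv, hextw2, ← hy]
        exact lexB hdec ha haa ha1
      obtain ⟨m2, hm2_eq, hm2_diag, hm2_supp⟩ := IH w2 (mu_lt_of_lexGT hlexw2)
      have hcw2 : ∀ i, code (extN w2) i = if i = r then a - 1 else if i = r + 1 then r + 1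
          else if i < r then i else code y i := by
        intro i
        rw [hextw2]
        rcases eq_or_ne i r with h | h
        · rw [if_pos h, h]
          exact code_w'_r hdec ha haa ha1
        rcases eq_or_ne i (r + 1) with h2 | h2
        · rw [if_neg h, if_pos h2, h2]
          exact code_w'_r1 hdec ha haa ha1
        rcases lt_or_ge i r with h3 | h3
        · rw [if_neg h, if_neg h2, if_pos h3]
          exact code_w'_lt hdec ha haa ha1 h3
        · rw [if_neg h, if_neg h2, if_neg (by omega)]
          exact code_w'_ge hdec ha haa ha1 (by omega)
      have hAw2 : ∏ i ∈ Finset.range n, esymmRange i (code (extN w2) i)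
          = esymmRange r (a - 1) * esymmRange (r + 1) (r + 1) * Cfac := by
        rw [prod_factor hrn (fun i => esymmRange i (code (extN w2) i)), hcw2 r, if_pos rfl,
          hcw2 (r + 1), if_neg (by omega : ¬ r + 1 = r), if_pos rfl]
        congr 1
        apply Finset.prod_congr rfl
        intro i hi
        rw [Finset.mem_erase] at hi
        obtain ⟨hi1, hi2⟩ := hi
        rw [Finset.mem_erase] at hi2
        rw [hcw2 i, if_neg hi2.1, if_neg hi1]
        rcases lt_or_ge i r with h | h
        · rw [if_pos h, hpre i (by omega)]
        · rw [if_neg (by omega)]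
      refine ⟨fun x => m1 x + m2 x, ?_, ?_, ?_⟩
      · have hsplit : esymmRange (r + 1) a = esymmRange r a + X r * esymmRange r (a - 1) := by
          have hs := esymmRange_succ r (a - 1)
          rw [show a - 1 + 1 = a by omega] at hs
          exact hs
        have hgoal : esymmRange r r * (esymmRange r a + X r * esymmRange r (a - 1)) * Cfac
            = B + esymmRange r (a - 1) * esymmRange (r + 1) (r + 1) * Cfac := by
          rw [hB, he_r1]
          ring
        rw [hAw, hsplit, hgoal, ← hAw2, hm2_eq, ← hsum1, ← Finset.sum_add_distrib]
        apply Finset.sum_congr rfl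
        intro x _
        rw [← add_smul]
      · have hm2w : m2 w = 0 := by
          by_contra hc
          rcases hm2_supp w hc with he | hlex
          · rw [he] at hlexw2
            exact lexGT_irrefl _ hlexw2
          · exact lexGT_irrefl _ (lexGT_trans hlex hlexw2)
        show m1 w + m2 w = 1
        rw [hm1w, hm2w]
        norm_num
      · intro x hx
        have hx' : m1 x + m2 x ≠ 0 := hx
        rcases eq_or_ne (m1 x) 0 with h1 | h1
        · have h2 : m2 x ≠ 0 := by
            intro h
            rw [h1, h] at hx'
            exact hx' (by norm_num)
          rcases hm2_supp x h2 with he | hlex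
          · right
            rw [he]
            exact hlexw2
          · right
            exact lexGT_trans hlex hlexw2
        · exact hm1supp x h1

include hdom hrec in
theorem main_all (w : Equiv.Perm (Fin n)) :
    ∃ m : Equiv.Perm (Fin n) → ℤ,
      (∏ i ∈ Finset.range n, esymmRange i (code (extN w) i))
        = (∑ u : Equiv.Perm (Fin n), m u • S (extN u)) ∧
      m w = 1 ∧ ∀ u, m u ≠ 0 → u = w ∨ LexGT (extN u⁻¹) (extN w⁻¹) := by
  have H : ∀ (N : ℕ) (w : Equiv.Perm (Fin n)), mu w ≤ N →
      ∃ m : Equiv.Perm (Fin n) → ℤ,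
        (∏ i ∈ Finset.range n, esymmRange i (code (extN w) i))
          = (∑ u : Equiv.Perm (Fin n), m u • S (extN u)) ∧
        m w = 1 ∧ ∀ u, m u ≠ 0 → u = w ∨ LexGT (extN u⁻¹) (extN w⁻¹) := by
    intro N
    induction N with
    | zero =>
      intro w hw
      exact main_step S hdom hrec w (fun v hv => absurd hv (by omega))
    | succ N ih =>
      intro w hw
      exact main_step S hdom hrec w (fun v hv => ih v (by omega))
  exact H (mu w) w le_rfl

end Main2

/-- In `Π_{2≤i≤n} e_{l_i(w)}(x₁,…,x_{i−1}) = Σ_u n_{wu} 𝔖_u`, we have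
`n_{ww} = 1`, and `n_{wu} ≠ 0` implies `w⁻¹ ≤_lex u⁻¹`. -/
theorem stmt13 (n : ℕ) (S : Equiv.Perm ℕ → MvPolynomial ℕ ℤ)
    (hdom : ∀ (v : Equiv.Perm ℕ) (m : ℕ), (∀ i, m ≤ i → v i = i) →
      (∀ i j, i < j → j < m → v j < v i) →
      S v = ∏ i ∈ Finset.range m, X i ^ (v i))
    (hrec : ∀ (v : Equiv.Perm ℕ) (i : ℕ), FinSupp v →
      ell (v * Equiv.swap i (i + 1)) < ell v →
      (X i - X (i + 1)) * S (v * Equiv.swap i (i + 1))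
        = S v - rename (⇑(Equiv.swap i (i + 1))) (S v))
    (w : Equiv.Perm (Fin n)) (c : Equiv.Perm (Fin n) → ℤ)
    (hc : ∏ i ∈ Finset.Ico 1 n, esymmRange i (code (extN w) i)
      = ∑ u : Equiv.Perm (Fin n), c u • S (extN u)) :
    c w = 1 ∧ ∀ u : Equiv.Perm (Fin n), c u ≠ 0 →
      u = w ∨ LexGT (extN u⁻¹) (extN w⁻¹) := by
  classical
  have hIco : ∏ i ∈ Finset.Ico 1 n, esymmRange i (code (extN w) i)
      = ∏ i ∈ Finset.range n, esymmRange i (code (extN w) i) := by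
    rw [Finset.range_eq_Ico]
    rcases Nat.eq_zero_or_pos n with rfl | hn
    · rfl
    · rw [Finset.prod_eq_prod_Ico_succ_bot hn, code_zero, esymmRange_zero, one_mul]
  obtain ⟨m, hm_eq, hm_diag, hm_supp⟩ := main_all S hdom hrec w
  have hzero : ∑ u : Equiv.Perm (Fin n), (c u - m u) • S (extN u) = 0 := by
    have hsplit : ∑ u : Equiv.Perm (Fin n), (c u - m u) • S (extN u)
        = (∑ u : Equiv.Perm (Fin n), c u • S (extN u))
          - ∑ u : Equiv.Perm (Fin n), m u • S (extN u) := by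
      rw [← Finset.sum_sub_distrib]
      apply Finset.sum_congr rfl
      intro x _
      rw [sub_smul]
    rw [hsplit, ← hc, ← hm_eq, hIco, sub_self]
  have hcm := indep S hdom hrec (Finset.univ.sup fun u : Equiv.Perm (Fin n) => ell (extN u))
    (fun u => c u - m u) (fun u _ => Finset.le_sup (f := fun u => ell (extN u)) (Finset.mem_univ u)) hzero
  have hcm' : ∀ u, c u = m u := fun u => by have h : c u - m u = 0 := hcm u; omega
  constructor
  · rw [hcm' w, hm_diag]
  · intro u hu
    apply hm_supp
    rw [← hcm' u]
    exact hu
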